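/- Let a, b, c, d ∈ K^× with a ≠ b, c ≠ d, and ad - bc ≠ 0, and let C be the Scholten curve (ad-bc)Y² = ((a-b)X² - (c-d))(aX² - c)(bX² - d). Then the map φ_{a,b}(X,Y) = ( (ab(a-b)/(ad-bc))·(X² - (c-d)/(a-b)), (ab(a-b)/(ad-bc))·Y ) sends points of C to points of the elliptic curve E_{a,b} : y² = x(x-a)(x-b); i.e., if (X,Y) satisfies the equation of C then φ_{a,b}(X,Y) satisfies the equation of E_{a,b}. -/

import Mathlib

set_option maxHeartbeats 1000000 in
/-- the map `φ_{a,b}` sends points of the Scholten curve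
`(ad-bc)Y² = ((a-b)X² - (c-d))(aX² - c)(bX² - d)` to points of the elliptic curve
`E_{a,b} : y² = x(x-a)(x-b)`. -/
theorem stmt11 {K : Type*} [Field K] (hchar : (2 : K) ≠ 0)
    (a b c d : K) (ha : a ≠ 0) (hb : b ≠ 0) (hc : c ≠ 0) (hd : d ≠ 0)
    (hab : a ≠ b) (hcd : c ≠ d) (habcd : a * d - b * c ≠ 0)
    (X Y : K)
    (hC : (a * d - b * c) * Y ^ 2 =
      ((a - b) * X ^ 2 - (c - d)) * (a * X ^ 2 - c) * (b * X ^ 2 - d)) :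
    (a * b * (a - b) / (a * d - b * c) * Y) ^ 2 =
      (a * b * (a - b) / (a * d - b * c) * (X ^ 2 - (c - d) / (a - b))) *
        (a * b * (a - b) / (a * d - b * c) * (X ^ 2 - (c - d) / (a - b)) - a) *
        (a * b * (a - b) / (a * d - b * c) * (X ^ 2 - (c - d) / (a - b)) - b) := by
  have hab' : a - b ≠ 0 := sub_ne_zero.mpr hab
  field_simp
  linear_combination (a-b)^2 * hC
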